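/- Let A ∈ ℝ^{n×n} be normal with real Schur decomposition A = Q S Qᵀ, where S = [[Λ cos Θ, 0, −Λ sin Θ],[0, Λ̆, 0],[Λ sin Θ, 0, Λ cos Θ]], with all diagonal entries of Λ sin Θ nonzero. If V ∈ ℝ^{n×r} has orthonormal columns and skew(A) V = 0, then there exists an orthogonal matrix R̆ ∈ O(r) such that A (V R̆) = (V R̆) Λ̆. -/

import Mathlib

open Matrix

set_option maxHeartbeats 1000000

theorem real_eigvecs_from_skew_kernel {p r : ℕ}
    (lam theta : Fin p → ℝ) (breve : Fin r → ℝ)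
    (hls : ∀ j, lam j * Real.sin (theta j) ≠ 0)
    (Q : Matrix ((Fin p ⊕ Fin r) ⊕ Fin p) ((Fin p ⊕ Fin r) ⊕ Fin p) ℝ)
    (hQ₁ : Qᵀ * Q = 1) (hQ₂ : Q * Qᵀ = 1)
    (A : Matrix ((Fin p ⊕ Fin r) ⊕ Fin p) ((Fin p ⊕ Fin r) ⊕ Fin p) ℝ)
    (hA : A =
      Q * fromBlocks
        (fromBlocks (diagonal fun j => lam j * Real.cos (theta j)) 0 0 (diagonal breve))
        (fromRows (-(diagonal fun j => lam j * Real.sin (theta j))) 0)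
        (fromCols (diagonal fun j => lam j * Real.sin (theta j)) 0)
        (diagonal fun j => lam j * Real.cos (theta j)) * Qᵀ)
    (V : Matrix ((Fin p ⊕ Fin r) ⊕ Fin p) (Fin r) ℝ)
    (hV : Vᵀ * V = 1)
    (hskew : ((1/2 : ℝ) • (A - Aᵀ)) * V = 0) :
    ∃ R : Matrix (Fin r) (Fin r) ℝ,
      Rᵀ * R = 1 ∧ R * Rᵀ = 1 ∧ A * (V * R) = (V * R) * diagonal breve := by
  set Dc : Matrix (Fin p) (Fin p) ℝ := diagonal (fun j => lam j * Real.cos (theta j)) with hDc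
  set Ds : Matrix (Fin p) (Fin p) ℝ := diagonal (fun j => lam j * Real.sin (theta j)) with hDs
  set S : Matrix ((Fin p ⊕ Fin r) ⊕ Fin p) ((Fin p ⊕ Fin r) ⊕ Fin p) ℝ :=
    fromBlocks (fromBlocks Dc 0 0 (diagonal breve)) (fromRows (-Ds) 0)
      (fromCols Ds 0) Dc with hSdef
  set W : Matrix ((Fin p ⊕ Fin r) ⊕ Fin p) (Fin r) ℝ := Qᵀ * V with hWdef
  -- step 1: A V = Aᵀ V
  have hAV : A * V = Aᵀ * V := by
    have h2 : (A - Aᵀ) * V = 0 := by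
      have h := congrArg (fun M => (2:ℝ) • M) hskew
      simpa [smul_mul_assoc, smul_smul] using h
    rw [Matrix.sub_mul] at h2
    exact sub_eq_zero.mp h2
  -- step 2: S W = Sᵀ W
  have hAQ : A = Q * S * Qᵀ := hA
  have hAT : Aᵀ = Q * Sᵀ * Qᵀ := by
    rw [hAQ]; simp [Matrix.transpose_mul, Matrix.mul_assoc]
  have key : ∀ (T : Matrix ((Fin p ⊕ Fin r) ⊕ Fin p) ((Fin p ⊕ Fin r) ⊕ Fin p) ℝ),
      Qᵀ * (Q * T * Qᵀ * V) = T * W := by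
    intro T
    rw [hWdef, ← Matrix.mul_assoc, ← Matrix.mul_assoc, ← Matrix.mul_assoc, hQ₁,
      Matrix.one_mul, Matrix.mul_assoc]
  have hSW : S * W = Sᵀ * W := by
    have h : Qᵀ * (Q * S * Qᵀ * V) = Qᵀ * (Q * Sᵀ * Qᵀ * V) := by
      rw [← hAQ, ← hAT, hAV]
    rw [key S, key Sᵀ] at h
    exact h
  -- step 3: zero rows of W
  have hWa : ∀ (j : Fin p) (c : Fin r), W (Sum.inl (Sum.inl j)) c = 0 := by
    intro j c
    have h := congrFun (congrFun hSW (Sum.inr j)) c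
    simp [hSdef, hDc, hDs, Matrix.mul_apply, Fintype.sum_sum_type, Matrix.transpose_apply,
      Matrix.fromBlocks_apply₁₁, Matrix.fromBlocks_apply₁₂, Matrix.fromBlocks_apply₂₁,
      Matrix.fromBlocks_apply₂₂, Matrix.fromRows_apply_inl, Matrix.fromRows_apply_inr,
      Matrix.fromCols_apply_inl, Matrix.fromCols_apply_inr, Matrix.diagonal_apply,
      ite_mul, mul_ite, Finset.sum_ite_eq, Finset.sum_ite_eq'] at h
    -- h should reduce to an equation forcing the claim
    have hne := hls j
    have h0 : lam j * Real.sin (theta j) * W (Sum.inl (Sum.inl j)) c = 0 := by linarith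
    exact (mul_eq_zero.mp h0).resolve_left hne
  have hWc : ∀ (j : Fin p) (c : Fin r), W (Sum.inr j) c = 0 := by
    intro j c
    have h := congrFun (congrFun hSW (Sum.inl (Sum.inl j))) c
    simp [hSdef, hDc, hDs, Matrix.mul_apply, Fintype.sum_sum_type, Matrix.transpose_apply,
      Matrix.fromBlocks_apply₁₁, Matrix.fromBlocks_apply₁₂, Matrix.fromBlocks_apply₂₁,
      Matrix.fromBlocks_apply₂₂, Matrix.fromRows_apply_inl, Matrix.fromRows_apply_inr,
      Matrix.fromCols_apply_inl, Matrix.fromCols_apply_inr, Matrix.diagonal_apply,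
      ite_mul, mul_ite, Finset.sum_ite_eq, Finset.sum_ite_eq'] at h
    have hne := hls j
    have h0 : lam j * Real.sin (theta j) * W (Sum.inr j) c = 0 := by linarith
    exact (mul_eq_zero.mp h0).resolve_left hne
  -- the middle block of W
  set B : Matrix (Fin r) (Fin r) ℝ := Matrix.of (fun b c => W (Sum.inl (Sum.inr b)) c) with hB
  have hWW : Wᵀ * W = 1 := by
    rw [hWdef, Matrix.transpose_mul, Matrix.transpose_transpose,
      Matrix.mul_assoc, ← Matrix.mul_assoc Q Qᵀ V, hQ₂, Matrix.one_mul, hV]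
  have hBB : Bᵀ * B = 1 := by
    ext b c
    have h := congrFun (congrFun hWW b) c
    simpa [Matrix.mul_apply, Fintype.sum_sum_type, Matrix.transpose_apply, hWa, hWc, hB] using h
  have hBB' : B * Bᵀ = 1 := mul_eq_one_comm.mp hBB
  refine ⟨Bᵀ, ?_, ?_, ?_⟩
  · rw [Matrix.transpose_transpose, hBB']
  · rw [Matrix.transpose_transpose, hBB]
  · -- main eigen equation
    have hWR : ∀ i c, (W * Bᵀ) i c =
        (Sum.elim (Sum.elim (fun _ => (0 : Fin r → ℝ)) (fun b => fun c => if b = c then 1 else 0))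
          (fun _ => 0) : _ → Fin r → ℝ) i c := by
      intro i c
      rcases i with (j | b) | j
      · simp [Matrix.mul_apply, hWa]
      · have h := congrFun (congrFun hBB' b) c
        simpa [Matrix.mul_apply, hB, Matrix.transpose_apply, Matrix.one_apply] using h
      · simp [Matrix.mul_apply, hWc]
    have hSM : S * (W * Bᵀ) = (W * Bᵀ) * diagonal breve := by
      ext i c
      rcases i with (j | b) | j
      · simp [Matrix.mul_apply, Fintype.sum_sum_type, hWR, hSdef, hDc, hDs,
          Matrix.fromBlocks_apply₁₁, Matrix.fromBlocks_apply₁₂,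
          Matrix.fromRows_apply_inl, Matrix.diagonal_apply, ite_mul, mul_ite,
          Finset.sum_ite_eq, Finset.sum_ite_eq']
      · simp [Matrix.mul_apply, Fintype.sum_sum_type, hWR, hSdef, hDc, hDs,
          Matrix.fromBlocks_apply₁₁, Matrix.fromBlocks_apply₁₂,
          Matrix.fromRows_apply_inr, Matrix.diagonal_apply, ite_mul, mul_ite,
          Finset.sum_ite_eq, Finset.sum_ite_eq']
        split_ifs with hbc
        · rw [hbc]
        · rfl
      · simp [Matrix.mul_apply, Fintype.sum_sum_type, hWR, hSdef, hDc, hDs,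
          Matrix.fromBlocks_apply₂₁, Matrix.fromBlocks_apply₂₂,
          Matrix.fromCols_apply_inl, Matrix.fromCols_apply_inr, Matrix.diagonal_apply,
          ite_mul, mul_ite, Finset.sum_ite_eq, Finset.sum_ite_eq']
    have hVQ : V * Bᵀ = Q * (W * Bᵀ) := by
      rw [hWdef, ← Matrix.mul_assoc, ← Matrix.mul_assoc, hQ₂, Matrix.one_mul]
    calc A * (V * Bᵀ) = Q * S * Qᵀ * (V * Bᵀ) := by rw [hAQ]
      _ = Q * (S * (W * Bᵀ)) := by
          rw [hWdef]
          rw [Matrix.mul_assoc (Q * S) Qᵀ (V * Bᵀ), ← Matrix.mul_assoc Qᵀ V Bᵀ,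
            Matrix.mul_assoc Q S _]
      _ = Q * ((W * Bᵀ) * diagonal breve) := by rw [hSM]
      _ = (V * Bᵀ) * diagonal breve := by rw [hVQ]; simp only [Matrix.mul_assoc]
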